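/- Higher-order Schwarz problem, uniqueness (homogeneous case). Let n ≥ 1 and let w : D → ℂ be a function on the open unit disk such that the iterated Wirtinger derivatives ∂^k w/∂z̄^k exist and are continuous on D for 0 ≤ k ≤ n, and suppose: ∂ⁿw/∂z̄ⁿ = 0 on D; for each 0 ≤ k ≤ n−1 and every θ₀ ∈ ℝ, Re(∂^k w/∂z̄^k)(z) → 0 as z → e^{iθ₀} within D; and Im(∂^k w/∂z̄^k)(0) = 0 for each 0 ≤ k ≤ n−1. Then w is identically zero on D. -/

import Mathlib

open Complex Real Metric Filter

/-- The open unit disk in `ℂ`. -/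
noncomputable def unitDisk : Set ℂ := Metric.ball (0 : ℂ) 1

/-- The Wirtinger derivative `∂/∂z̄` as an operator on functions. -/
noncomputable def wdzbarOp (f : ℂ → ℂ) : ℂ → ℂ := fun z =>
  (1 / 2) * ((fderiv ℝ f z) 1 + Complex.I * (fderiv ℝ f z) Complex.I)

lemma wd_CR {f : ℂ → ℂ} {z : ℂ} (h0 : wdzbarOp f z = 0) :
    (fderiv ℝ f z) Complex.I = Complex.I * (fderiv ℝ f z) 1 := by
  set F := fderiv ℝ f z with hF
  have h1 : F 1 + Complex.I * F Complex.I = 0 := by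
    have := h0
    simp only [wdzbarOp] at this
    field_simp at this
    rw [mul_zero] at this
    exact this
  have h2 : Complex.I * (F 1 + Complex.I * F Complex.I) = Complex.I * 0 := by rw [h1]
  rw [mul_add, ← mul_assoc, Complex.I_mul_I] at h2
  linear_combination -h2

lemma CR {f : ℂ → ℂ} {z : ℂ} (hd : DifferentiableAt ℝ f z) (h0 : wdzbarOp f z = 0) :
    DifferentiableAt ℂ f z := by
  set F := fderiv ℝ f z with hF
  have hFI : F Complex.I = Complex.I * F 1 := wd_CR h0
  set c := F 1 with hc
  set L : ℂ →L[ℂ] ℂ := c • ContinuousLinearMap.id ℂ ℂ with hL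
  have hrs : F = L.restrictScalars ℝ := by
    ext1 v
    have hv : v = (v.re : ℝ) • (1 : ℂ) + (v.im : ℝ) • Complex.I := by
      simp [Complex.ext_iff]
    have hLv : (L.restrictScalars ℝ) v = c * v := by
      simp [hL, smul_eq_mul]
    rw [hLv]
    conv_lhs => rw [hv]
    rw [map_add, map_smul, map_smul, hFI, ← hc]
    rw [Complex.real_smul, Complex.real_smul]
    nth_rewrite 3 [← Complex.re_add_im v]
    ring
  have hfd : HasFDerivAt f (L.restrictScalars ℝ) z := hrs ▸ hd.hasFDerivAt
  refine ⟨L, ?_⟩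
  rw [hasFDerivAt_iff_isLittleO_nhds_zero] at hfd ⊢
  exact hfd

lemma boundary_small {f : ℂ → ℂ}
    (hbd : ∀ θ₀ : ℝ, Tendsto (fun z => (f z).re)
      (nhdsWithin (Complex.exp (Complex.I * θ₀)) unitDisk) (nhds 0))
    {ε : ℝ} (hε : 0 < ε) :
    ∃ δ > 0, ∀ z ∈ unitDisk, 1 - δ < ‖z‖ → |(f z).re| < ε := by
  set S := {z : ℂ | z ∈ unitDisk → |(f z).re| < ε} with hSdef
  have hS : ∀ ζ ∈ sphere (0:ℂ) 1, S ∈ nhds ζ := by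
    intro ζ hζ
    have habs : ‖ζ‖ = 1 := by simpa using mem_sphere_zero_iff_norm.mp hζ
    obtain ⟨θ, hθ⟩ := (Complex.norm_eq_one_iff ζ).mp habs
    have hexp : Complex.exp (Complex.I * θ) = ζ := by rw [mul_comm]; exact hθ
    have h2 := hbd θ
    rw [hexp] at h2
    have h3 : ∀ᶠ z in nhdsWithin ζ unitDisk, |(f z).re| < ε := by
      have := Metric.tendsto_nhds.mp h2 ε hε
      simpa [Real.dist_eq] using this
    rw [eventually_nhdsWithin_iff] at h3
    exact h3.mono (fun z hz hzD => hz hzD)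
  have hint : sphere (0:ℂ) 1 ⊆ interior S :=
    fun ζ hζ => mem_interior_iff_mem_nhds.mpr (hS ζ hζ)
  obtain ⟨δ, hδ0, hδ⟩ := (isCompact_sphere (0:ℂ) 1).exists_thickening_subset_open
    isOpen_interior hint
  refine ⟨δ, hδ0, fun z hz hzδ => ?_⟩
  have hz1 : ‖z‖ < 1 := by simpa [unitDisk] using hz
  have hthick : z ∈ Metric.thickening δ (sphere (0:ℂ) 1) := by
    rcases eq_or_ne z 0 with rfl | hz0
    · refine Metric.mem_thickening_iff.mpr ⟨1, by simp, ?_⟩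
      simp only [norm_zero] at hzδ
      have h1δ : (1:ℝ) < δ := by linarith
      simpa [dist_eq_norm] using h1δ
    · set a := ‖z‖ with hadef
      have ha : 0 < a := by rw [hadef]; exact norm_pos_iff.mpr hz0
      refine Metric.mem_thickening_iff.mpr ⟨(a⁻¹ : ℝ) • z, ?_, ?_⟩
      · rw [mem_sphere_zero_iff_norm, norm_smul, ← hadef]
        rw [Real.norm_eq_abs, abs_of_pos (inv_pos.mpr ha)]
        field_simp
      · have hzy : z - (a⁻¹ : ℝ) • z = ((1 - a⁻¹ : ℝ)) • z := by
          rw [sub_smul, one_smul]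
        rw [dist_eq_norm, hzy, norm_smul, ← hadef]
        have hia : (1:ℝ) ≤ a⁻¹ := one_le_inv_iff₀.mpr ⟨ha, le_of_lt hz1⟩
        rw [Real.norm_eq_abs, abs_of_nonpos (by linarith)]
        have : -(1 - a⁻¹) * a = 1 - a := by field_simp; ring
        rw [this]
        linarith
  have := hδ hthick
  exact interior_subset this hz

lemma re_le {f : ℂ → ℂ} (hd : ∀ z ∈ unitDisk, DifferentiableAt ℂ f z)
    (hc : ContinuousOn f unitDisk) {ε δ : ℝ} (hε : 0 < ε) (hδ : 0 < δ)
    (hb : ∀ z ∈ unitDisk, 1 - δ < ‖z‖ → (f z).re < ε) :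
    ∀ z ∈ unitDisk, (f z).re ≤ ε := by
  intro z hz
  have hz1 : ‖z‖ < 1 := by simpa [unitDisk] using hz
  set a : ℝ := max (‖z‖) (max (1 - δ) (1/2)) with hadef
  have ha1 : a < 1 := by
    apply max_lt hz1 (max_lt (by linarith) (by norm_num))
  obtain ⟨r, har, hr1⟩ := exists_between ha1
  have hr0 : 0 < r := lt_of_le_of_lt (le_trans (by norm_num) (le_trans (le_max_right _ _) (le_max_right _ _))) har
  have hsub : closedBall (0:ℂ) r ⊆ unitDisk := by
    rw [unitDisk]; exact closedBall_subset_ball hr1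
  have hdc : DiffContOnCl ℂ (fun w => Complex.exp (f w)) (ball (0:ℂ) r) := by
    constructor
    · intro x hx
      exact ((hd x (hsub (ball_subset_closedBall hx))).cexp).differentiableWithinAt
    · apply (Complex.continuous_exp.comp_continuousOn (hc.mono hsub)).mono
      exact closure_ball_subset_closedBall
  have hbound := Complex.norm_le_of_forall_mem_frontier_norm_le
    (isBounded_ball (x := (0:ℂ)) (r := r)) hdc (C := Real.exp ε) ?_ (z := z) ?_
  · rw [Complex.norm_exp, Real.exp_le_exp] at hbound
    exact hbound
  · intro w hw
    rw [frontier_ball _ (ne_of_gt hr0), mem_sphere_zero_iff_norm] at hw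
    have hwa : ‖w‖ = r := by exact hw
    have hwD : w ∈ unitDisk := by
      rw [unitDisk, mem_ball_zero_iff]; rw [hwa]; exact hr1
    have hre : (f w).re < ε := hb w hwD (by rw [hwa]; exact lt_of_le_of_lt (le_trans (le_max_left _ _) (le_max_right (‖z‖) _)) har)
    rw [Complex.norm_exp]
    exact Real.exp_le_exp.mpr (le_of_lt hre)
  · rw [closure_ball _ (ne_of_gt hr0), mem_closedBall_zero_iff]
    exact le_of_lt (lt_of_le_of_lt (le_max_left _ _) har)

lemma core {f : ℂ → ℂ}
    (hdiff : ∀ z ∈ unitDisk, DifferentiableAt ℝ f z)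
    (hcont : ContinuousOn f unitDisk)
    (heq : ∀ z ∈ unitDisk, wdzbarOp f z = 0)
    (hbd : ∀ θ₀ : ℝ, Tendsto (fun z => (f z).re)
      (nhdsWithin (Complex.exp (Complex.I * θ₀)) unitDisk) (nhds 0))
    (him : (f 0).im = 0) :
    ∀ z ∈ unitDisk, f z = 0 := by
  have h0D : (0:ℂ) ∈ unitDisk := by rw [unitDisk]; exact mem_ball_self one_pos
  have hdC : ∀ z ∈ unitDisk, DifferentiableAt ℂ f z := fun z hz => CR (hdiff z hz) (heq z hz)
  have hre0 : ∀ z ∈ unitDisk, (f z).re = 0 := by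
    intro z hz
    have hle : ∀ ε : ℝ, 0 < ε → (f z).re ≤ ε ∧ -(f z).re ≤ ε := by
      intro ε hε
      obtain ⟨δ, hδ0, hδ⟩ := boundary_small hbd hε
      constructor
      · exact re_le hdC hcont hε hδ0 (fun w hw h => (abs_lt.mp (hδ w hw h)).2) z hz
      · have := re_le (f := fun w => -f w) (fun w hw => (hdC w hw).neg) hcont.neg hε hδ0
          (fun w hw h => by
            simp only [Complex.neg_re]
            exact lt_of_le_of_lt (neg_le_abs _) (hδ w hw h)) z hz
        simpa using this
    have h1 : (f z).re ≤ 0 := by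
      by_contra h
      push_neg at h
      have := (hle ((f z).re / 2) (by linarith)).1
      linarith
    have h2 : -(f z).re ≤ 0 := by
      by_contra h
      push_neg at h
      have := (hle (-(f z).re / 2) (by linarith)).2
      linarith
    linarith
  have hfd0 : ∀ z ∈ unitDisk, fderiv ℝ f z = 0 := by
    intro z hz
    have hzo : unitDisk ∈ nhds z := (isOpen_ball).mem_nhds hz
    have hre : (fun w => (f w).re) =ᶠ[nhds z] fun _ => (0:ℝ) :=
      eventually_of_mem hzo (fun w hw => hre0 w hw)
    have hdRe : fderiv ℝ (fun w => (f w).re) z = 0 := by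
      rw [hre.fderiv_eq]
      exact fderiv_const_apply 0
    have hcomp : fderiv ℝ (fun w => (f w).re) z = Complex.reCLM.comp (fderiv ℝ f z) :=
      (Complex.reCLM.hasFDerivAt.comp z (hdiff z hz).hasFDerivAt).fderiv
    have hRe0 : ∀ v : ℂ, ((fderiv ℝ f z) v).re = 0 := by
      intro v
      have := congrArg (fun L => L v) (hcomp.symm.trans hdRe)
      simpa using this
    set F := fderiv ℝ f z with hF
    have hFI : F Complex.I = Complex.I * F 1 := wd_CR (heq z hz)
    have ha : (F 1).im = 0 := by
      have h := hRe0 Complex.I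
      rw [hFI] at h
      simpa using h
    have hF1 : F 1 = 0 := Complex.ext (hRe0 1) ha
    have hFI0 : F Complex.I = 0 := by rw [hFI, hF1, mul_zero]
    ext1 v
    have hv : v = (v.re : ℝ) • (1 : ℂ) + (v.im : ℝ) • Complex.I := by
      simp [Complex.ext_iff]
    conv_lhs => rw [hv]
    rw [map_add, map_smul, map_smul, hF1, hFI0]
    simp
  have hconst : ∀ z ∈ unitDisk, f z = f 0 := by
    intro z hz
    have hcv : Convex ℝ unitDisk := by rw [unitDisk]; exact convex_ball 0 1
    have := hcv.norm_image_sub_le_of_norm_fderivWithin_le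
      (fun x hx => (hdiff x hx).differentiableWithinAt) (C := 0)
      (fun x hx => by
        rw [fderivWithin_of_isOpen (by rw [unitDisk]; exact isOpen_ball) hx, hfd0 x hx]
        simp) h0D hz
    simp only [zero_mul] at this
    have := norm_le_zero_iff.mp this
    exact sub_eq_zero.mp this
  intro z hz
  rw [hconst z hz]
  exact Complex.ext (hre0 0 h0D) him

lemma main_aux (n : ℕ) (hn : 1 ≤ n) : ∀ w : ℂ → ℂ,
    (∀ k < n, ∀ z ∈ unitDisk, DifferentiableAt ℝ (wdzbarOp^[k] w) z) →
    (∀ k ≤ n, ContinuousOn (wdzbarOp^[k] w) unitDisk) →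
    (∀ z ∈ unitDisk, wdzbarOp^[n] w z = 0) →
    (∀ k < n, ∀ θ₀ : ℝ,
      Tendsto (fun z => (wdzbarOp^[k] w z).re)
        (nhdsWithin (Complex.exp (Complex.I * θ₀)) unitDisk) (nhds 0)) →
    (∀ k < n, (wdzbarOp^[k] w 0).im = 0) →
    ∀ z ∈ unitDisk, w z = 0 := by
  induction n, hn using Nat.le_induction with
  | base =>
    intro w hdiff hcont heq hbd him
    have h0 : ∀ z ∈ unitDisk, wdzbarOp w z = 0 := by
      intro z hz
      have := heq z hz
      rwa [Function.iterate_one] at this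
    exact core (fun z hz => by simpa using hdiff 0 one_pos z hz)
      (by simpa using hcont 0 (Nat.zero_le 1)) h0
      (fun θ => by simpa using hbd 0 one_pos θ)
      (by simpa using him 0 one_pos)
  | succ n hn ih =>
    intro w hdiff hcont heq hbd him
    have hu : ∀ z ∈ unitDisk, wdzbarOp w z = 0 := by
      apply ih (wdzbarOp w)
      · intro k hk z hz
        have := hdiff (k+1) (by omega) z hz
        rwa [Function.iterate_succ_apply] at this
      · intro k hk
        have := hcont (k+1) (by omega)
        rwa [Function.iterate_succ_apply] at this
      · intro z hz
        have := heq z hz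
        rwa [Function.iterate_succ_apply] at this
      · intro k hk θ
        have := hbd (k+1) (by omega) θ
        rwa [Function.iterate_succ_apply] at this
      · intro k hk
        have := him (k+1) (by omega)
        rwa [Function.iterate_succ_apply] at this
    exact core (fun z hz => by simpa using hdiff 0 (by omega) z hz)
      (by simpa using hcont 0 (Nat.zero_le _)) hu
      (fun θ => by simpa using hbd 0 (by omega) θ)
      (by simpa using him 0 (by omega))


/-- Uniqueness for the higher-order Schwarz problem (homogeneous case): a function on the unit
disk whose iterated `∂/∂z̄`-derivatives up to order `n` exist and are continuous on the disk,
which satisfies `∂ⁿw/∂z̄ⁿ = 0`, whose derivatives of order `k < n` have real parts tending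
to `0` at every boundary point and imaginary parts vanishing at the origin, is identically
zero. -/
theorem higher_schwarz_uniqueness (n : ℕ) (hn : 1 ≤ n) (w : ℂ → ℂ)
    (hdiff : ∀ k < n, ∀ z ∈ unitDisk, DifferentiableAt ℝ (wdzbarOp^[k] w) z)
    (hcont : ∀ k ≤ n, ContinuousOn (wdzbarOp^[k] w) unitDisk)
    (heq : ∀ z ∈ unitDisk, wdzbarOp^[n] w z = 0)
    (hbd : ∀ k < n, ∀ θ₀ : ℝ,
      Tendsto (fun z => (wdzbarOp^[k] w z).re)
        (nhdsWithin (Complex.exp (Complex.I * θ₀)) unitDisk) (nhds 0))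
    (him : ∀ k < n, (wdzbarOp^[k] w 0).im = 0) :
    ∀ z ∈ unitDisk, w z = 0 :=
  main_aux n hn w hdiff hcont heq hbd him
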